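/- arXiv:1706.04848 — 4 statements merged into one kernel-verified Lean document; each statement's English description precedes it below -/
import Mathlib

section
/- Let N be a natural number, ε ∈ (0,1), and let λ_1,…,λ_N ∈ [0,1]. Set S = Σ_{k=1}^N λ_k and g = Σ_{k=1}^N (λ_k − λ_k²). Then the number of indices k with λ_k ≥ 1−ε is at least S − g/ε, and the number of indices k with λ_k > ε is at most S + g/ε. -/
/-- Let `N : ℕ`, `ε ∈ (0,1)`, and `λ_1,…,λ_N ∈ [0,1]`.
Set `S = Σ λ_k` and `g = Σ (λ_k − λ_k²)`. Then the number of indices with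
`λ_k ≥ 1−ε` is at least `S − g/ε`, and the number of indices with `λ_k > ε`
is at most `S + g/ε`. -/
theorem stmt0 (N : ℕ) (ε : ℝ) (hε : ε ∈ Set.Ioo (0 : ℝ) 1)
    (lam : Fin N → ℝ) (hlam : ∀ k, lam k ∈ Set.Icc (0 : ℝ) 1) :
    (∑ k, lam k) - (∑ k, (lam k - (lam k) ^ 2)) / ε ≤
        ((Finset.univ.filter (fun k => 1 - ε ≤ lam k)).card : ℝ) ∧
      ((Finset.univ.filter (fun k => ε < lam k)).card : ℝ) ≤
        (∑ k, lam k) + (∑ k, (lam k - (lam k) ^ 2)) / ε := by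
  obtain ⟨hε0, hε1⟩ := hε
  have hg : ∀ k, 0 ≤ lam k - (lam k) ^ 2 := by
    intro k
    obtain ⟨h0, h1⟩ := hlam k
    have : (lam k) ^ 2 ≤ lam k := by nlinarith
    linarith
  constructor
  · have h1 : ∀ k : Fin N, lam k - (lam k - (lam k) ^ 2) / ε ≤
        (if 1 - ε ≤ lam k then (1:ℝ) else 0) := by
      intro k
      obtain ⟨h0, h1⟩ := hlam k
      by_cases h : 1 - ε ≤ lam k
      · simp [h]
        have : 0 ≤ (lam k - (lam k) ^ 2) / ε := div_nonneg (hg k) hε0.le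
        linarith
      · simp [h]
        push_neg at h
        have key : ε * lam k ≤ lam k - (lam k) ^ 2 := by nlinarith
        have := (le_div_iff₀ hε0).mpr (by linarith [key] : lam k * ε ≤ lam k - (lam k) ^ 2)
        linarith
    calc (∑ k, lam k) - (∑ k, (lam k - (lam k) ^ 2)) / ε
        = ∑ k, (lam k - (lam k - (lam k) ^ 2) / ε) := by
          rw [eq_comm, Finset.sum_sub_distrib, ← Finset.sum_div]
      _ ≤ ∑ k, (if 1 - ε ≤ lam k then (1:ℝ) else 0) :=
          Finset.sum_le_sum fun k _ => h1 k
      _ = ((Finset.univ.filter (fun k => 1 - ε ≤ lam k)).card : ℝ) := by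
          simp [Finset.sum_boole]
  · have h2 : ∀ k : Fin N, (if ε < lam k then (1:ℝ) else 0) ≤
        lam k + (lam k - (lam k) ^ 2) / ε := by
      intro k
      obtain ⟨h0, h1⟩ := hlam k
      by_cases h : ε < lam k
      · simp [h]
        have key : ε * (1 - lam k) ≤ lam k - (lam k) ^ 2 := by nlinarith
        have := (le_div_iff₀ hε0).mpr (by linarith [key] : (1 - lam k) * ε ≤ lam k - (lam k) ^ 2)
        linarith
      · simp [h]
        have : 0 ≤ (lam k - (lam k) ^ 2) / ε := div_nonneg (hg k) hε0.le
        positivity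
    calc ((Finset.univ.filter (fun k => ε < lam k)).card : ℝ)
        = ∑ k, (if ε < lam k then (1:ℝ) else 0) := by
          simp [Finset.sum_boole]
      _ ≤ ∑ k, (lam k + (lam k - (lam k) ^ 2) / ε) :=
          Finset.sum_le_sum fun k _ => h2 k
      _ = (∑ k, lam k) + (∑ k, (lam k - (lam k) ^ 2)) / ε := by
          rw [Finset.sum_add_distrib, ← Finset.sum_div]
end

section
/- Let S ⊆ ℤ² be a finite set. Then for every point k ∈ S \ S̄_1, the boundary distance of k with respect to S \ S̄_1 equals its boundary distance with respect to S, i.e., d(k; S \ S̄_1) = d(k; S). -/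
/-- The Chebyshev (`l∞`) distance between two grid points of `ℤ²`. -/
def chebDist (k l : ℤ × ℤ) : ℕ := max (k.1 - l.1).natAbs (k.2 - l.2).natAbs

/-- The `l∞` boundary distance of `k` with respect to a set `P ⊆ ℤ²`:
the minimal `l∞` distance from `k` to a point outside `P`. -/
noncomputable def bdist (P : Set (ℤ × ℤ)) (k : ℤ × ℤ) : ℕ :=
  sInf {n | ∃ l ∉ P, chebDist k l = n}

/-- The `i`-th distance layer `S_i = {k ∈ P : d(k;P) = i}`. -/
def layer (P : Set (ℤ × ℤ)) (i : ℕ) : Set (ℤ × ℤ) :=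
  {k ∈ P | bdist P k = i}

/-- `S̄_i`: the points of `S_i` all of whose 8 neighbours `l` satisfy `d(l;P) ≤ i`. -/
def layerBar (P : Set (ℤ × ℤ)) (i : ℕ) : Set (ℤ × ℤ) :=
  {k ∈ layer P i | ∀ l, chebDist k l = 1 → bdist P l ≤ i}

lemma chebDist_triangle (k l m : ℤ × ℤ) : chebDist k m ≤ chebDist k l + chebDist l m := by
  simp only [chebDist]; omega

lemma chebDist_eq_zero {k l : ℤ × ℤ} (h : chebDist k l = 0) : k = l := by
  simp only [chebDist] at h
  have h1 : k.1 = l.1 ∧ k.2 = l.2 := by omega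
  exact Prod.ext h1.1 h1.2

lemma bdistSet_nonempty {P : Set (ℤ × ℤ)} (h : Pᶜ.Nonempty) (k : ℤ × ℤ) :
    {n | ∃ l ∉ P, chebDist k l = n}.Nonempty := by
  obtain ⟨l, hl⟩ := h
  exact ⟨chebDist k l, l, hl, rfl⟩

lemma bdist_le {P : Set (ℤ × ℤ)} {l : ℤ × ℤ} (hl : l ∉ P) (k : ℤ × ℤ) :
    bdist P k ≤ chebDist k l := Nat.sInf_le ⟨l, hl, rfl⟩

lemma bdist_attained {P : Set (ℤ × ℤ)} (h : Pᶜ.Nonempty) (k : ℤ × ℤ) :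
    ∃ l ∉ P, chebDist k l = bdist P k := Nat.sInf_mem (bdistSet_nonempty h k)

lemma sub_sign_natAbs (d : ℤ) : (d - d.sign).natAbs = d.natAbs - 1 := by
  rcases lt_trichotomy d 0 with h | h | h
  · rw [Int.sign_eq_neg_one_of_neg h]; omega
  · simp [h]
  · rw [Int.sign_eq_one_of_pos h]; omega

lemma sign_natAbs (d : ℤ) : d.sign.natAbs = min d.natAbs 1 := by
  rcases lt_trichotomy d 0 with h | h | h
  · rw [Int.sign_eq_neg_one_of_neg h]; omega
  · simp [h]
  · rw [Int.sign_eq_one_of_pos h]; omega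

/-- For a finite `S ⊆ ℤ²`, removing `S̄_1` preserves the boundary
distance of every remaining point: `d(k; S \ S̄_1) = d(k; S)` for `k ∈ S \ S̄_1`. -/
theorem stmt3 (S : Set (ℤ × ℤ)) (hS : S.Finite) :
    ∀ k ∈ S \ layerBar S 1, bdist (S \ layerBar S 1) k = bdist S k := by
  intro k hk
  set T := S \ layerBar S 1 with hT
  have hSc : Sᶜ.Nonempty := (Set.Finite.infinite_compl hS).nonempty
  have hTc : Tᶜ.Nonempty := hSc.mono (Set.compl_subset_compl.2 Set.diff_subset)
  apply le_antisymm
  · obtain ⟨m, hm, hmd⟩ := bdist_attained hSc k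
    have hmT : m ∉ T := fun h => hm h.1
    calc bdist T k ≤ chebDist k m := bdist_le hmT k
      _ = bdist S k := hmd
  · obtain ⟨l, hl, hld⟩ := bdist_attained hTc k
    by_cases hlS : l ∈ S
    · have hlb : l ∈ layerBar S 1 := by
        by_contra h; exact hl ⟨hlS, h⟩
      set n := chebDist k l with hn'
      have hkl : k ≠ l := fun h => hk.2 (h ▸ hlb)
      have hn : 1 ≤ n := by
        rcases Nat.eq_zero_or_pos n with h | h
        · exact absurd (chebDist_eq_zero h) hkl
        · exact h
      set d1 := k.1 - l.1 with hd1
      set d2 := k.2 - l.2 with hd2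
      have hbounds : d1.natAbs ≤ n ∧ d2.natAbs ≤ n ∧ (d1.natAbs = n ∨ d2.natAbs = n) := by
        simp only [hn', chebDist, ← hd1, ← hd2]; omega
      set l' : (ℤ × ℤ) := (l.1 + d1.sign, l.2 + d2.sign) with hl'def
      have hll' : chebDist l l' = 1 := by
        simp only [chebDist, hl'def]
        have e1 : l.1 - (l.1 + d1.sign) = -d1.sign := by ring
        have e2 : l.2 - (l.2 + d2.sign) = -d2.sign := by ring
        rw [e1, e2, Int.natAbs_neg, Int.natAbs_neg, sign_natAbs, sign_natAbs]
        omega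
      have hkl' : chebDist k l' ≤ n - 1 := by
        simp only [chebDist, hl'def]
        have e1 : k.1 - (l.1 + d1.sign) = d1 - d1.sign := by rw [hd1]; ring
        have e2 : k.2 - (l.2 + d2.sign) = d2 - d2.sign := by rw [hd2]; ring
        rw [e1, e2, sub_sign_natAbs, sub_sign_natAbs]
        omega
      have hbl' : bdist S l' ≤ 1 := hlb.2 l' hll'
      obtain ⟨m, hm, hmd⟩ := bdist_attained hSc l'
      have hml' : chebDist l' m ≤ 1 := hmd ▸ hbl'
      have : bdist S k ≤ chebDist k m := bdist_le hm k
      have htri := chebDist_triangle k l' m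
      rw [← hld]
      omega
    · rw [← hld]
      exact bdist_le hlS k
end

section
/- Let n_R, n_Λ be positive integers with n_Λ ≤ n_R, and set γ = n_R/n_Λ. Then for every integer q with 1 ≤ q ≤ n_R/2, the Dirichlet kernel tail sum satisfies Σ_{k=q}^{n_R−q} ( sin(π n_Λ k/n_R) / (n_R sin(π k/n_R)) )² < 1/(4q) + γ/(16 q²). -/
open Real Finset

-- core: x cos x ≤ sin x on [0, π]
lemma core {x : ℝ} (h0 : 0 ≤ x) (h1 : x ≤ π) : x * Real.cos x ≤ Real.sin x := by
  rcases lt_or_ge x (π/2) with h | h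
  · have hc : 0 < Real.cos x := Real.cos_pos_of_mem_Ioo ⟨by linarith [Real.pi_pos], h⟩
    have := Real.le_tan h0 h
    rw [Real.tan_eq_sin_div_cos, le_div_iff₀ hc] at this
    linarith
  · have hc : Real.cos x ≤ 0 := Real.cos_nonpos_of_pi_div_two_le_of_le h (by linarith [Real.pi_pos])
    have hs : 0 ≤ Real.sin x := Real.sin_nonneg_of_nonneg_of_le_pi h0 h1
    nlinarith

-- normSq (exp (φ i) - 1) = 4 sin^2 (φ/2)
lemma normSq_exp_sub_one (φ : ℝ) :
    Complex.normSq (Complex.exp (φ * Complex.I) - 1) = 4 * Real.sin (φ/2) ^ 2 := by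
  have h3 : Real.cos φ = 1 - 2 * Real.sin (φ/2) ^ 2 := by
    have h := Real.cos_two_mul (φ/2)
    have h2 := Real.sin_sq_add_cos_sq (φ/2)
    have : (2:ℝ) * (φ/2) = φ := by ring
    rw [this] at h
    nlinarith
  rw [Complex.normSq_apply, Complex.sub_re, Complex.sub_im, Complex.one_re, Complex.one_im,
    Complex.exp_ofReal_mul_I_re, Complex.exp_ofReal_mul_I_im]
  nlinarith [Real.sin_sq_add_cos_sq φ]

lemma sin_pos_of_Icc {N k : ℕ} (hN : 1 ≤ N) (hk1 : 1 ≤ k) (hk2 : k ≤ N - 1) :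
    0 < Real.sin (π * k / N) := by
  have hN0 : (0:ℝ) < N := by exact_mod_cast hN
  have hk0 : (1:ℝ) ≤ k := by exact_mod_cast hk1
  have hkN : (k:ℝ) < N := by exact_mod_cast (by omega : k < N)
  apply Real.sin_pos_of_pos_of_lt_pi
  · positivity
  · rw [div_lt_iff₀ hN0]
    nlinarith [Real.pi_pos]

lemma helper1 (r : ℝ) (n : ℕ) :
    Complex.exp ((r:ℂ) * Complex.I) ^ n = Complex.exp (((n * r : ℝ) : ℂ) * Complex.I) := by
  rw [← Complex.exp_nat_mul]
  push_cast
  ring_nf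

lemma helper2 (r : ℝ) :
    (starRingEnd ℂ) (Complex.exp ((r:ℂ) * Complex.I)) =
      Complex.exp (((-r : ℝ) : ℂ) * Complex.I) := by
  rw [← Complex.exp_conj]
  push_cast
  simp [Complex.conj_ofReal]

lemma helper3 (a b : ℝ) :
    Complex.exp ((a:ℂ) * Complex.I) * Complex.exp ((b:ℂ) * Complex.I) =
      Complex.exp (((a + b : ℝ) : ℂ) * Complex.I) := by
  rw [← Complex.exp_add]
  push_cast
  ring_nf

lemma exp_ne_one {N : ℕ} (hN : 0 < N) {t : ℝ} (ht : t ≠ 0) (ht2 : |t| < N) :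
    Complex.exp (((2 * π * t / N : ℝ) : ℂ) * Complex.I) ≠ 1 := by
  intro h
  have h2 : Complex.normSq (Complex.exp (((2 * π * t / N : ℝ) : ℂ) * Complex.I) - 1) = 0 := by
    rw [h]; simp
  rw [normSq_exp_sub_one] at h2
  have hN0 : (0:ℝ) < N := by exact_mod_cast hN
  have hs : Real.sin (2 * π * t / N / 2) = 0 := by nlinarith [sq_nonneg (Real.sin (2 * π * t / N / 2))]
  have harg : 2 * π * t / N / 2 = π * (t / N) := by ring
  rw [harg] at hs
  have htN : |t / N| < 1 := by rw [abs_div, abs_of_pos hN0]; rwa [div_lt_one hN0]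
  rw [abs_lt] at htN
  have := (Real.sin_eq_zero_iff_of_lt_of_lt (x := π * (t / N))
    (by nlinarith [Real.pi_pos]) (by nlinarith [Real.pi_pos])).1 hs
  have : t / N = 0 := by
    have hppos := Real.pi_pos
    rcases mul_eq_zero.1 this with h | h
    · linarith
    · exact h
  exact ht (by field_simp at this; simpa using this)

lemma ortho {N : ℕ} (hN : 0 < N) {j j' : ℕ} (hj : j < N) (hj' : j' < N) :
    ∑ k ∈ Finset.range N,
      Complex.exp (((2 * π * ((j:ℝ) - j') / N : ℝ) : ℂ) * Complex.I) ^ k =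
      if j = j' then (N:ℂ) else 0 := by
  rcases eq_or_ne j j' with h | h
  · subst h
    simp
  · rw [if_neg h]
    have ht : ((j:ℝ) - j') ≠ 0 := by
      intro hh
      exact h (by exact_mod_cast sub_eq_zero.1 hh)
    have ht2 : |(j:ℝ) - j'| < N := by
      rw [abs_lt]
      have c1 : (j:ℝ) < N := by exact_mod_cast hj
      have c2 : (j':ℝ) < N := by exact_mod_cast hj'
      have c3 : (0:ℝ) ≤ j := Nat.cast_nonneg j
      have c4 : (0:ℝ) ≤ j' := Nat.cast_nonneg j'
      constructor <;> nlinarith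
    have hw := exp_ne_one hN ht ht2
    rw [geom_sum_eq hw]
    have hpow : Complex.exp (((2 * π * ((j:ℝ) - j') / N : ℝ) : ℂ) * Complex.I) ^ N = 1 := by
      rw [helper1]
      have hN0 : (N:ℝ) ≠ 0 := by positivity
      have harg : ((N:ℝ) * (2 * π * ((j:ℝ) - j') / N)) = ((j:ℤ) - j') * (2 * π) := by
        push_cast; field_simp
      rw [harg]
      have := Complex.exp_int_mul_two_pi_mul_I ((j:ℤ) - j')
      rw [← this]
      push_cast
      ring_nf
    rw [hpow, sub_self, zero_div]

lemma sum_normSq_dirichlet (N L : ℕ) (hN : 0 < N) (hle : L ≤ N) :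
    ∑ k ∈ Finset.range N,
      Complex.normSq (∑ j ∈ Finset.range L,
        Complex.exp (((2 * π * k * j / N : ℝ) : ℂ) * Complex.I)) = L * N := by
  have key : ∑ k ∈ Finset.range N,
      ((Complex.normSq (∑ j ∈ Finset.range L,
        Complex.exp (((2 * π * k * j / N : ℝ) : ℂ) * Complex.I)) : ℝ) : ℂ) = (L : ℂ) * N := by
    have step1 : ∀ k ∈ Finset.range N,
        ((Complex.normSq (∑ j ∈ Finset.range L,
          Complex.exp (((2 * π * k * j / N : ℝ) : ℂ) * Complex.I)) : ℝ) : ℂ)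
        = ∑ j ∈ Finset.range L, ∑ j' ∈ Finset.range L,
            Complex.exp (((2 * π * ((j:ℝ) - j') / N : ℝ) : ℂ) * Complex.I) ^ k := by
      intro k _
      rw [← Complex.mul_conj, map_sum, Finset.sum_mul_sum]
      apply Finset.sum_congr rfl
      intro j _
      apply Finset.sum_congr rfl
      intro j' _
      rw [helper2, helper3, helper1]
      congr 2
      push_cast
      have hN0 : (N:ℝ) ≠ 0 := by positivity
      field_simp
      ring
    rw [Finset.sum_congr rfl step1, Finset.sum_comm]
    rw [Finset.sum_congr rfl (fun j _ => Finset.sum_comm (s := Finset.range N))]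
    have inner : ∀ j ∈ Finset.range L, (∑ j' ∈ Finset.range L, ∑ k ∈ Finset.range N,
        Complex.exp (((2 * π * ((j:ℝ) - j') / N : ℝ) : ℂ) * Complex.I) ^ k) = (N : ℂ) := by
      intro j hj
      have : ∀ j' ∈ Finset.range L, (∑ k ∈ Finset.range N,
          Complex.exp (((2 * π * ((j:ℝ) - j') / N : ℝ) : ℂ) * Complex.I) ^ k)
          = if j = j' then (N:ℂ) else 0 := by
        intro j' hj'
        exact ortho hN (lt_of_lt_of_le (Finset.mem_range.1 hj) hle)
          (lt_of_lt_of_le (Finset.mem_range.1 hj') hle)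
      rw [Finset.sum_congr rfl this, Finset.sum_ite_eq (Finset.range L) j (fun _ => (N:ℂ)),
        if_pos hj]
    rw [Finset.sum_congr rfl inner, Finset.sum_const, Finset.card_range, nsmul_eq_mul]
  have := key
  rw [← Complex.ofReal_sum] at this
  exact_mod_cast this

lemma parseval (N L : ℕ) (hN : 0 < N) (hL : 0 < L) (hle : L ≤ N) :
    ∑ k ∈ Finset.Icc 1 (N - 1), Real.sin (π * L * k / N) ^ 2 / Real.sin (π * k / N) ^ 2
      = (L:ℝ) * N - (L:ℝ)^2 := by
  have hN0 : (0:ℝ) < N := by exact_mod_cast hN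
  have hsplit : Finset.range N = insert 0 (Finset.Icc 1 (N - 1)) := by
    ext x
    simp only [Finset.mem_range, Finset.mem_insert, Finset.mem_Icc]
    omega
  have h0 : (0:ℕ) ∉ Finset.Icc 1 (N - 1) := by simp
  have htotal := sum_normSq_dirichlet N L hN hle
  rw [hsplit, Finset.sum_insert h0] at htotal
  have hS0 : Complex.normSq (∑ j ∈ Finset.range L,
      Complex.exp (((2 * π * (0:ℕ) * j / N : ℝ) : ℂ) * Complex.I)) = (L:ℝ)^2 := by
    have : ∀ j ∈ Finset.range L,
        Complex.exp (((2 * π * (0:ℕ) * j / N : ℝ) : ℂ) * Complex.I) = 1 := by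
      intro j _
      norm_num
    rw [Finset.sum_congr rfl this, Finset.sum_const, Finset.card_range, nsmul_eq_mul, mul_one]
    simp [Complex.normSq_natCast]
    ring
  rw [hS0] at htotal
  have hterm : ∀ k ∈ Finset.Icc 1 (N - 1),
      Complex.normSq (∑ j ∈ Finset.range L,
        Complex.exp (((2 * π * k * j / N : ℝ) : ℂ) * Complex.I))
      = Real.sin (π * L * k / N) ^ 2 / Real.sin (π * k / N) ^ 2 := by
    intro k hk
    rw [Finset.mem_Icc] at hk
    have hsin : 0 < Real.sin (π * k / N) := sin_pos_of_Icc hN hk.1 hk.2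
    have hk0 : (1:ℝ) ≤ k := by exact_mod_cast hk.1
    have hkN : (k:ℝ) < N := by exact_mod_cast (by omega : k < N)
    have hrw : ∀ j : ℕ, Complex.exp (((2 * π * k * j / N : ℝ) : ℂ) * Complex.I)
        = Complex.exp (((2 * π * k / N : ℝ) : ℂ) * Complex.I) ^ j := by
      intro j
      rw [helper1]
      congr 2
      push_cast
      ring
    simp_rw [hrw]
    have hne : Complex.exp (((2 * π * (k:ℝ) / N : ℝ) : ℂ) * Complex.I) ≠ 1 := by
      have := exp_ne_one hN (t := (k:ℝ)) (by linarith) (by rw [abs_of_nonneg (by linarith)]; exact hkN)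
      convert this using 4 <;> push_cast <;> ring
    have hne' : Complex.exp (((2 * π * k / N : ℝ) : ℂ) * Complex.I) ≠ 1 := by
      convert hne using 4
    rw [geom_sum_eq hne', map_div₀]
    rw [helper1]
    have e1 : ((L:ℝ) * (2 * π * k / N)) = 2 * (π * L * k / N) := by push_cast; ring
    have e2 : (2 * π * (k:ℝ) / N) = 2 * (π * k / N) := by ring
    rw [e1, e2, normSq_exp_sub_one, normSq_exp_sub_one]
    have h1 : (2 * (π * (L:ℝ) * k / N)) / 2 = π * L * k / N := by ring
    have h2 : (2 * (π * (k:ℝ) / N)) / 2 = π * k / N := by ring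
    rw [h1, h2]
    rw [mul_div_mul_left _ _ (by norm_num : (4:ℝ) ≠ 0)]
  rw [Finset.sum_congr rfl hterm] at htotal
  have : ((L:ℝ)) * N = (L:ℝ)^2 + ∑ k ∈ Finset.Icc 1 (N - 1),
      Real.sin (π * L * k / N) ^ 2 / Real.sin (π * k / N) ^ 2 := by exact_mod_cast htotal.symm
  linarith

lemma lemT {c h : ℝ} (hh : 0 < h) (hh2 : h ≤ π/2) (ha : 0 < c - h) (hb : c + h < π) :
    2*h / Real.sin c ^ 2 ≤
      Real.cos (c-h)/Real.sin (c-h) - Real.cos (c+h)/Real.sin (c+h) := by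
  have hpi := Real.pi_pos
  have hsa : 0 < Real.sin (c-h) := Real.sin_pos_of_pos_of_lt_pi ha (by linarith)
  have hsb : 0 < Real.sin (c+h) := Real.sin_pos_of_pos_of_lt_pi (by linarith) hb
  have hsc : 0 < Real.sin c := Real.sin_pos_of_pos_of_lt_pi (by linarith) (by linarith)
  have hsh : 0 < Real.sin h := Real.sin_pos_of_pos_of_lt_pi hh (by linarith)
  have hch : 0 ≤ Real.cos h := Real.cos_nonneg_of_mem_Icc ⟨by linarith, hh2⟩
  have hkey : h * Real.cos h ≤ Real.sin h := core hh.le (by linarith)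
  have hprod : Real.sin (c-h) * Real.sin (c+h) = Real.sin c ^ 2 - Real.sin h ^ 2 := by
    rw [Real.sin_sub, Real.sin_add]
    nlinarith [Real.sin_sq_add_cos_sq c, Real.sin_sq_add_cos_sq h]
  rw [div_sub_div _ _ hsa.ne' hsb.ne', div_le_div_iff₀ (by positivity) (by positivity)]
  have hnum : Real.cos (c-h) * Real.sin (c+h) - Real.sin (c-h) * Real.cos (c+h)
      = Real.sin (2*h) := by
    have h2h : Real.sin (2*h) = Real.sin ((c+h) - (c-h)) := by congr 1; ring
    rw [h2h]
    conv_rhs => rw [Real.sin_sub]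
    ring
  rw [hnum, Real.sin_two_mul, hprod]
  have key2 : 2*h*Real.sin c^2*(Real.sin h^2 + Real.cos h^2) = 2*h*Real.sin c^2 := by
    rw [Real.sin_sq_add_cos_sq]; ring
  have A : 0 ≤ (Real.sin h - h * Real.cos h) * (Real.cos h * Real.sin c ^ 2) :=
    mul_nonneg (sub_nonneg.2 hkey) (mul_nonneg hch (sq_nonneg _))
  have B : 0 ≤ h * Real.sin h ^ 2 * (1 - Real.sin c ^ 2) :=
    mul_nonneg (mul_nonneg hh.le (sq_nonneg _)) (sub_nonneg.2 (Real.sin_sq_le_one c))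
  nlinarith [A, B, key2]

lemma tele (G : ℕ → ℝ) (q : ℕ) (hq : 1 ≤ q) :
    ∀ M, q ≤ M + 1 → ∑ k ∈ Finset.Icc q M, (G (k-1) - G k) = G (q-1) - G M := by
  intro M
  induction M with
  | zero =>
    intro hM
    have : q = 1 := by omega
    subst this
    simp
  | succ M ih =>
    intro hM
    rcases Nat.lt_or_ge q (M + 2) with h | h
    · have hqM : q ≤ M + 1 := by omega
      rw [Finset.sum_Icc_succ_top hqM, ih hqM]
      have : (M + 1) - 1 = M := by omega
      rw [this]
      ring
    · have : q = M + 2 := by omega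
      subst this
      rw [Finset.Icc_eq_empty (by omega)]
      simp

lemma tail_bound (N L q : ℕ) (hN : 0 < N) (hq1 : 1 ≤ q) (hq2 : 2*q ≤ N) :
    ∑ k ∈ Finset.Icc q (N - q),
      (Real.sin (π * L * k / N) / ((N:ℝ) * Real.sin (π * k / N)))^2
      ≤ 4/(π^2*(2*(q:ℝ)-1)) := by
  have hpi := Real.pi_pos
  have hn : (0:ℝ) < N := by exact_mod_cast hN
  set G : ℕ → ℝ := fun j =>
    Real.cos (π*(2*(j:ℝ)+1)/(2*N))/Real.sin (π*(2*(j:ℝ)+1)/(2*N)) with hG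
  have step : ∀ k ∈ Finset.Icc q (N - q),
      (Real.sin (π * L * k / N) / ((N:ℝ) * Real.sin (π * k / N)))^2
        ≤ (1/(π*N)) * (G (k-1) - G k) := by
    intro k hk
    rw [Finset.mem_Icc] at hk
    have hk1 : 1 ≤ k := le_trans hq1 hk.1
    have hkN : k ≤ N - 1 := by omega
    have hkr : (1:ℝ) ≤ k := by exact_mod_cast hk1
    have hkNr : (k:ℝ) ≤ (N:ℝ) - 1 := by
      have h' : (k + 1 : ℕ) ≤ N := by omega
      have h'' : ((k:ℝ) + 1) ≤ N := by exact_mod_cast h'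
      linarith
    have hsc : 0 < Real.sin (π * k / N) := sin_pos_of_Icc hN hk1 hkN
    have hT := lemT (c := π * k / N) (h := π/(2*N))
      (by positivity)
      (by rw [div_le_div_iff₀ (by positivity) (by norm_num)]
          nlinarith [(by exact_mod_cast hN : (1:ℝ) ≤ N)])
      (by rw [sub_pos]; rw [div_lt_div_iff₀ (by positivity) (by positivity)]
          nlinarith [mul_pos (mul_pos hpi hn) (by linarith : (0:ℝ) < 2*(k:ℝ) - 1)])
      (by rw [div_add_div _ _ (by positivity) (by positivity), div_lt_iff₀ (by positivity)]
          nlinarith [mul_le_mul_of_nonneg_right (mul_le_mul_of_nonneg_left hkNr hpi.le)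
            (by positivity : (0:ℝ) ≤ 2*(N:ℝ)), mul_pos hpi hn])
    have hc : ((k - 1 : ℕ) : ℝ) = (k:ℝ) - 1 := by
      rw [Nat.cast_sub hk1]; norm_num
    have harg1 : π*(2*((k:ℝ)-1)+1)/(2*(N:ℝ)) = π * k / N - π/(2*N) := by
      field_simp; ring
    have harg2 : π*(2*(k:ℝ)+1)/(2*(N:ℝ)) = π * k / N + π/(2*N) := by
      field_simp
    have hGk1 : G (k-1) = Real.cos (π * k / N - π/(2*N))/Real.sin (π * k / N - π/(2*N)) := by
      simp only [hG, hc, harg1]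
    have hGk : G k = Real.cos (π * k / N + π/(2*N))/Real.sin (π * k / N + π/(2*N)) := by
      simp only [hG, harg2]
    rw [hGk1, hGk]
    have h1 : (Real.sin (π * L * k / N) / ((N:ℝ) * Real.sin (π * k / N)))^2
        ≤ 1 / ((N:ℝ) * Real.sin (π * k / N))^2 := by
      rw [div_pow]
      exact div_le_div₀ zero_le_one (Real.sin_sq_le_one _) (by positivity) le_rfl
    have h2 : 1 / ((N:ℝ) * Real.sin (π * k / N))^2
        = (1/(π*N)) * (2*(π/(2*N)) / Real.sin (π * k / N) ^ 2) := by
      field_simp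
    calc (Real.sin (π * L * k / N) / ((N:ℝ) * Real.sin (π * k / N)))^2
        ≤ 1 / ((N:ℝ) * Real.sin (π * k / N))^2 := h1
      _ = (1/(π*N)) * (2*(π/(2*N)) / Real.sin (π * k / N) ^ 2) := h2
      _ ≤ (1/(π*N)) * (Real.cos (π * k / N - π/(2*N))/Real.sin (π * k / N - π/(2*N))
            - Real.cos (π * k / N + π/(2*N))/Real.sin (π * k / N + π/(2*N))) := by
          apply mul_le_mul_of_nonneg_left hT (by positivity)
  have hsum := Finset.sum_le_sum step
  rw [← Finset.mul_sum, tele G q hq1 (N - q) (by omega)] at hsum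
  set x0 := π*(2*(q:ℝ)-1)/(2*N) with hx0
  have hq2r : 2*(q:ℝ) ≤ N := by exact_mod_cast hq2
  have hqr : (1:ℝ) ≤ q := by exact_mod_cast hq1
  have hx0pos : 0 < x0 := by
    rw [hx0]
    exact div_pos (mul_pos hpi (by linarith)) (by positivity)
  have hx0lt : x0 < π := by
    rw [hx0, div_lt_iff₀ (by positivity)]
    nlinarith
  have hsx0 : 0 < Real.sin x0 := Real.sin_pos_of_pos_of_lt_pi hx0pos hx0lt
  have hGq : G (q-1) = Real.cos x0 / Real.sin x0 := by
    rw [hG]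
    have hc : ((q - 1 : ℕ) : ℝ) = (q:ℝ) - 1 := by rw [Nat.cast_sub hq1]; norm_num
    simp only [hc, hx0]
    congr 3 <;> ring
  have hGNq : G (N-q) = - (Real.cos x0 / Real.sin x0) := by
    rw [hG]
    have hc : ((N - q : ℕ) : ℝ) = (N:ℝ) - q := by
      rw [Nat.cast_sub (by omega)]
    simp only [hc]
    have harg : π*(2*((N:ℝ) - q)+1)/(2*N) = π - x0 := by
      rw [hx0]; field_simp; ring
    rw [harg, Real.cos_pi_sub, Real.sin_pi_sub]
    ring
  rw [hGq, hGNq] at hsum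
  have hcot : Real.cos x0 / Real.sin x0 ≤ 1 / x0 := by
    rw [div_le_div_iff₀ hsx0 hx0pos]
    have := core hx0pos.le hx0lt.le
    linarith
  calc ∑ k ∈ Finset.Icc q (N - q),
      (Real.sin (π * L * k / N) / ((N:ℝ) * Real.sin (π * k / N)))^2
      ≤ 1/(π*N) * (Real.cos x0 / Real.sin x0 - -(Real.cos x0 / Real.sin x0)) := hsum
    _ = 2/(π*N) * (Real.cos x0 / Real.sin x0) := by ring
    _ ≤ 2/(π*N) * (1/x0) := by
        apply mul_le_mul_of_nonneg_left hcot (by positivity)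
    _ = 4/(π^2*(2*(q:ℝ)-1)) := by
        have hone : (1:ℝ)/x0 = 2*N/(π*(2*(q:ℝ)-1)) := by
          rw [hx0, one_div_div]
        have hB : (0:ℝ) < π*(2*(q:ℝ)-1) := mul_pos hpi (by linarith)
        have hA : (0:ℝ) < π*(N:ℝ) := by positivity
        rw [hone, div_mul_div_comm]
        rw [div_eq_div_iff (mul_pos hA hB).ne' (by nlinarith [mul_pos hpi hB] : (0:ℝ) < π^2*(2*(q:ℝ)-1)).ne']
        ring

/-- Dirichlet kernel tail bound: for positive integers `n_Λ ≤ n_R`,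
`γ = n_R/n_Λ`, and every integer `q` with `1 ≤ q ≤ n_R/2`,
`Σ_{k=q}^{n_R−q} (sin(π n_Λ k/n_R)/(n_R sin(π k/n_R)))² < 1/(4q) + γ/(16q²)`. -/
theorem stmt10 (nR nΛ : ℕ) (hnR : 0 < nR) (hnΛ : 0 < nΛ) (hle : nΛ ≤ nR)
    (q : ℕ) (hq1 : 1 ≤ q) (hq2 : 2 * q ≤ nR) :
    ∑ k ∈ Finset.Icc q (nR - q),
        (Real.sin (Real.pi * nΛ * k / nR) / ((nR : ℝ) * Real.sin (Real.pi * k / nR))) ^ 2 <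
      1 / (4 * (q : ℝ)) + ((nR : ℝ) / (nΛ : ℝ)) / (16 * (q : ℝ) ^ 2) := by
  have hpi := Real.pi_pos
  have hn : (0:ℝ) < nR := by exact_mod_cast hnR
  have hl : (0:ℝ) < nΛ := by exact_mod_cast hnΛ
  have hγ : (1:ℝ) ≤ (nR:ℝ)/nΛ := (one_le_div hl).2 (by exact_mod_cast hle)
  rcases eq_or_lt_of_le hq1 with hq | hq
  · -- q = 1 : use Parseval
    subst hq
    have hrw : ∀ k ∈ Finset.Icc 1 (nR - 1),
        (Real.sin (π * nΛ * k / nR) / ((nR : ℝ) * Real.sin (π * k / nR))) ^ 2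
        = (Real.sin (π * nΛ * k / nR) ^ 2 / Real.sin (π * k / nR) ^ 2) / (nR:ℝ)^2 := by
      intro k _
      rw [div_pow, mul_pow, div_div]
      ring_nf
    rw [Finset.sum_congr rfl hrw, ← Finset.sum_div, parseval nR nΛ hnR hnΛ hle]
    have h1 : ((nΛ:ℝ) * nR - (nΛ:ℝ)^2)/(nR:ℝ)^2 ≤ 1/4 := by
      rw [div_le_iff₀ (by positivity)]
      nlinarith [sq_nonneg ((nR:ℝ) - 2*nΛ)]
    have h2 : (0:ℝ) < ((nR:ℝ)/nΛ)/(16 * ((1:ℕ):ℝ)^2) := by positivity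
    push_cast
    push_cast at h1 h2
    nlinarith
  · -- 2 ≤ q : use the cotangent telescoping bound
    have hq2' : 2 ≤ q := hq
    have hQ : (2:ℝ) ≤ q := by exact_mod_cast hq2'
    have hsum := tail_bound nR nΛ q hnR hq1 hq2
    have hπ : (3.141592:ℝ) < π := by
      have := Real.pi_gt_d6
      linarith
    have hπ2 : (9.86:ℝ) < π^2 := by nlinarith
    have hpos : (0:ℝ) < (2*(q:ℝ)-1)*(4*(q:ℝ)+1) := by nlinarith
    have key : 4/(π^2*(2*(q:ℝ)-1)) < (4*(q:ℝ)+1)/(16*(q:ℝ)^2) := by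
      rw [div_lt_div_iff₀ (by nlinarith : (0:ℝ) < π^2*(2*(q:ℝ)-1)) (by positivity)]
      nlinarith [mul_lt_mul_of_pos_left hπ2 hpos, sq_nonneg ((q:ℝ) - 2)]
    have split : (4*(q:ℝ)+1)/(16*(q:ℝ)^2) = 1/(4*(q:ℝ)) + 1/(16*(q:ℝ)^2) := by
      field_simp
      ring
    have last : 1/(4*(q:ℝ)) + 1/(16*(q:ℝ)^2)
        ≤ 1 / (4 * (q : ℝ)) + ((nR : ℝ) / (nΛ : ℝ)) / (16 * (q : ℝ) ^ 2) := by
      gcongr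
    calc ∑ k ∈ Finset.Icc q (nR - q),
        (Real.sin (π * nΛ * k / nR) / ((nR : ℝ) * Real.sin (π * k / nR))) ^ 2
        ≤ 4/(π^2*(2*(q:ℝ)-1)) := hsum
      _ < (4*(q:ℝ)+1)/(16*(q:ℝ)^2) := key
      _ = 1/(4*(q:ℝ)) + 1/(16*(q:ℝ)^2) := split
      _ ≤ _ := last
end

section
/- Let P and Q be orthogonal projection matrices on ℂ^N, and suppose φ_i, φ_j ∈ ℂ^N satisfy Qφ_i = φ_i, Qφ_j = φ_j, and QPQφ_i = λ_i φ_i for a scalar λ_i. Then ⟨Pφ_i, Pφ_j⟩ = λ_i ⟨φ_i, φ_j⟩. In particular, orthonormal eigenvectors φ_i of QPQ lying in the range of Q are doubly orthogonal: ⟨φ_i, φ_j⟩ = δ_{ij} and ⟨Pφ_i, Pφ_j⟩ = λ_i δ_{ij}. -/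
open scoped Matrix

/-- let `P`, `Q` be orthogonal projections on `ℂ^N`, and suppose
`φ_i, φ_j` satisfy `Qφ_i = φ_i`, `Qφ_j = φ_j` and `QPQφ_i = λ_i φ_i`. Then
`⟨Pφ_i, Pφ_j⟩ = λ_i ⟨φ_i, φ_j⟩` (double orthogonality). -/
theorem stmt15 (N : ℕ) (P Q : Matrix (Fin N) (Fin N) ℂ)
    (hP : P.IsHermitian) (hQ : Q.IsHermitian) (hP2 : P * P = P) (hQ2 : Q * Q = Q)
    (φi φj : Fin N → ℂ) (hi : Q.mulVec φi = φi) (hj : Q.mulVec φj = φj)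
    (lam : ℝ) (heig : (Q * P * Q).mulVec φi = (lam : ℂ) • φi) :
    star (P.mulVec φi) ⬝ᵥ P.mulVec φj = (lam : ℂ) * (star φi ⬝ᵥ φj) := by
  have hPQ : P.mulVec φi = (P * Q).mulVec φi := by rw [← Matrix.mulVec_mulVec, hi]
  have hPQj : P.mulVec φj = (P * Q).mulVec φj := by rw [← Matrix.mulVec_mulVec, hj]
  have hA : ((P * Q)ᴴ * (P * Q)) = Q * P * Q := by
    rw [Matrix.conjTranspose_mul, hQ.eq, hP.eq]
    calc Q * P * (P * Q) = Q * (P * P) * Q := by noncomm_ring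
    _ = Q * P * Q := by rw [hP2]
  calc star (P.mulVec φi) ⬝ᵥ P.mulVec φj
      = star ((P * Q).mulVec φi) ⬝ᵥ (P * Q).mulVec φj := by rw [hPQ, hPQj]
    _ = (star φi ᵥ* (P * Q)ᴴ) ⬝ᵥ (P * Q).mulVec φj := by rw [Matrix.star_mulVec]
    _ = star φi ⬝ᵥ ((P * Q)ᴴ * (P * Q)).mulVec φj := by
        simp [Matrix.dotProduct_mulVec, Matrix.vecMul_vecMul]
    _ = star φi ⬝ᵥ (Q * P * Q).mulVec φj := by rw [hA]
    _ = star ((Q * P * Q).mulVec φi) ⬝ᵥ φj := by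
        have hH : (Q * P * Q).IsHermitian := by
          unfold Matrix.IsHermitian
          simp [Matrix.conjTranspose_mul, hP.eq, hQ.eq, Matrix.mul_assoc]
        rw [Matrix.star_mulVec, hH.eq, ← Matrix.dotProduct_mulVec]
    _ = star ((lam : ℂ) • φi) ⬝ᵥ φj := by rw [heig]
    _ = (lam : ℂ) * (star φi ⬝ᵥ φj) := by
        simp [smul_dotProduct, star_smul, Complex.conj_ofReal]
end
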